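/- Let n be a positive integer, f : ℝⁿ → ℝⁿ, let 𝒳₀ and 𝒳ᵤ be subsets of ℝⁿ, and let ε₁ > 0. Suppose B : ℝⁿ → ℝ is continuously differentiable and satisfies: (a) B(x) ≤ 0 for all x ∈ 𝒳₀; (b) B(x) > 0 for all x ∈ 𝒳ᵤ; (c) ⟨∇B(x), f(x)⟩ ≤ 0 for all x ∈ ℝⁿ with |B(x)| ≤ √ε₁. Then every trajectory of the dynamical system ẋ = f(x) starting at a point of 𝒳₀ never enters 𝒳ᵤ: if x : ℝ → ℝⁿ is differentiable with x′(t) = f(x(t)) for all t ≥ 0 and x(0) ∈ 𝒳₀, then x(t) ∉ 𝒳ᵤ for all t ≥ 0. -/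

import Mathlib

/-- Barrier certificates ensure safety: if `B ≤ 0` on the initial set, `B > 0` on the
unsafe set, and the Lie derivative of `B` along `f` is nonpositive wherever
`|B x| ≤ √ε₁`, then trajectories starting in the initial set never enter the unsafe set. -/
theorem barrier_certificate_safety
    (n : ℕ) (hn : 0 < n)
    (f : EuclideanSpace ℝ (Fin n) → EuclideanSpace ℝ (Fin n))
    (X0 Xu : Set (EuclideanSpace ℝ (Fin n)))
    (ε₁ : ℝ) (hε₁ : 0 < ε₁)
    (B : EuclideanSpace ℝ (Fin n) → ℝ)
    (hB : ContDiff ℝ 1 B)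
    (hB0 : ∀ x ∈ X0, B x ≤ 0)
    (hBu : ∀ x ∈ Xu, 0 < B x)
    (hBlie : ∀ x : EuclideanSpace ℝ (Fin n),
      |B x| ≤ Real.sqrt ε₁ → fderiv ℝ B x (f x) ≤ 0)
    (x : ℝ → EuclideanSpace ℝ (Fin n))
    (hx : Differentiable ℝ x)
    (hode : ∀ t : ℝ, 0 ≤ t → deriv x t = f (x t))
    (hinit : x 0 ∈ X0) :
    ∀ t : ℝ, 0 ≤ t → x t ∉ Xu := by
  set g : ℝ → ℝ := fun s => B (x s) with hg_def
  have hBdiff : Differentiable ℝ B := hB.differentiable one_ne_zero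
  have hgderiv : ∀ s : ℝ, HasDerivAt g (fderiv ℝ B (x s) (deriv x s)) s := by
    intro s
    exact (hBdiff (x s)).hasFDerivAt.comp_hasDerivAt s (hx s).hasDerivAt
  have hgdiff : Differentiable ℝ g := fun s => (hgderiv s).differentiableAt
  have hgcont : Continuous g := hgdiff.continuous
  have hderiv_eq : ∀ s : ℝ, 0 ≤ s → deriv g s = fderiv ℝ B (x s) (f (x s)) := by
    intro s hs
    rw [(hgderiv s).deriv, hode s hs]
  -- main claim: g t ≤ 0 for all t ≥ 0
  have key : ∀ t : ℝ, 0 ≤ t → g t ≤ 0 := by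
    intro t ht
    by_contra hpos
    push_neg at hpos
    set c : ℝ := min (Real.sqrt ε₁) (g t) with hc_def
    have hc_pos : 0 < c := lt_min (Real.sqrt_pos.mpr hε₁) hpos
    have hc_le : c ≤ Real.sqrt ε₁ := min_le_left _ _
    -- last time g ≤ 0 before t
    set S : Set ℝ := Set.Icc 0 t ∩ {s | g s ≤ 0} with hS_def
    have hS_closed : IsClosed S :=
      isClosed_Icc.inter (isClosed_le hgcont continuous_const)
    have hS_compact : IsCompact S :=
      isCompact_Icc.of_isClosed_subset hS_closed Set.inter_subset_left
    have hS_ne : S.Nonempty := ⟨0, ⟨le_rfl, ht⟩, hB0 _ hinit⟩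
    set T : ℝ := sSup S with hT_def
    have hT_mem : T ∈ S := hS_compact.sSup_mem hS_ne
    have hT0 : 0 ≤ T := hT_mem.1.1
    have hTt : T ≤ t := hT_mem.1.2
    have hgT : g T ≤ 0 := hT_mem.2
    have hgpos : ∀ s, T < s → s ≤ t → 0 < g s := by
      intro s hTs hst
      by_contra h
      push_neg at h
      have : s ∈ S := ⟨⟨le_trans hT0 hTs.le, hst⟩, h⟩
      exact absurd (le_csSup hS_compact.bddAbove this) (not_le.mpr hTs)
    have hTlt : T < t := lt_of_le_of_ne hTt (fun h => absurd hgT (by rw [h]; exact not_le.mpr hpos))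
    -- first time after T that g reaches c
    set U : Set ℝ := Set.Icc T t ∩ {s | c ≤ g s} with hU_def
    have hU_closed : IsClosed U :=
      isClosed_Icc.inter (isClosed_le continuous_const hgcont)
    have hU_compact : IsCompact U :=
      isCompact_Icc.of_isClosed_subset hU_closed Set.inter_subset_left
    have hU_ne : U.Nonempty := ⟨t, ⟨hTt, le_rfl⟩, show c ≤ g t from min_le_right _ _⟩
    set T₁ : ℝ := sInf U with hT1_def
    have hT1_mem : T₁ ∈ U := hU_compact.sInf_mem hU_ne
    have hTT1 : T ≤ T₁ := hT1_mem.1.1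
    have hT1t : T₁ ≤ t := hT1_mem.1.2
    have hgT1 : c ≤ g T₁ := hT1_mem.2
    have hT1gt : T < T₁ := by
      rcases lt_or_eq_of_le hTT1 with h | h
      · exact h
      · exfalso; rw [← h] at hgT1; linarith
    have hlt_c : ∀ s, T ≤ s → s < T₁ → g s < c := by
      intro s hTs hsT1
      by_contra h
      push_neg at h
      have : s ∈ U := ⟨⟨hTs, le_trans hsT1.le hT1t⟩, h⟩
      exact absurd (csInf_le hU_compact.bddBelow this) (not_le.mpr hsT1)
    -- on (T, T₁), g is positive and < c ≤ √ε₁, so deriv g ≤ 0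
    have hderiv_np : ∀ s ∈ Set.Ioo T T₁, deriv g s ≤ 0 := by
      intro s ⟨hs1, hs2⟩
      have hs0 : 0 ≤ s := le_trans hT0 hs1.le
      have hgs_pos : 0 < g s := hgpos s hs1 (le_trans hs2.le hT1t)
      have habs : |g s| ≤ Real.sqrt ε₁ := by
        rw [abs_of_pos hgs_pos]
        exact le_trans (hlt_c s hs1.le hs2).le hc_le
      rw [hderiv_eq s hs0]
      exact hBlie (x s) habs
    -- antitone on [T', T₁] for every T' ∈ (T, T₁)
    have hmono : ∀ T' ∈ Set.Ioo T T₁, g T₁ ≤ g T' := by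
      intro T' ⟨hT'1, hT'2⟩
      have : AntitoneOn g (Set.Icc T' T₁) := by
        apply antitoneOn_of_deriv_nonpos (convex_Icc T' T₁) hgcont.continuousOn
          (fun s hs => (hgdiff s).differentiableWithinAt)
        intro s hs
        rw [interior_Icc] at hs
        exact hderiv_np s ⟨lt_trans hT'1 hs.1, hs.2⟩
      exact this ⟨le_rfl, hT'2.le⟩ ⟨hT'2.le, le_rfl⟩ hT'2.le
    -- take limit T' → T⁺ : g T₁ ≤ g T ≤ 0 < c ≤ g T₁, contradiction
    have htend : Filter.Tendsto g (nhdsWithin T (Set.Ioo T T₁)) (nhds (g T)) :=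
      (hgcont.tendsto T).mono_left nhdsWithin_le_nhds
    have hne : (nhdsWithin T (Set.Ioo T T₁)).NeBot := by
      apply IsGLB.nhdsWithin_neBot (isGLB_Ioo hT1gt)
      exact Set.nonempty_Ioo.mpr hT1gt
    have hle : g T₁ ≤ g T := by
      apply ge_of_tendsto htend
      filter_upwards [self_mem_nhdsWithin] with T' hT'
      exact hmono T' hT'
    linarith
  intro t ht hmem
  exact absurd (key t ht) (not_le.mpr (hBu _ hmem))
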